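/- Let a = -|μ|² with |μ| ≠ 1 and N ≥ 1, and define γ_j = ∑_{c=1}^{N} a^{{j+c-2}} σ_c / (1 - a^N) and β_j = -a ∑_{c=1}^{N} a^{{c-j-1}} σ_c / (1 - a^N) for real numbers σ_1,...,σ_N (indices mod N, {k} the mod-N remainder). Then for every j: γ_{2-j} + |μ|² γ_{1-j} = σ_j, and β_{m-j-1} + |μ|² β_{m-j} = |μ|² σ_{m-j}. -/

import Mathlib

lemma key_18 (N : ℕ) [NeZero N] (a : ℝ) (x : ZMod N) :
    a ^ x.val - a * a ^ ((x - 1 : ZMod N)).val = if x = 0 then 1 - a ^ N else 0 := by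
  have hN : 0 < N := Nat.pos_of_ne_zero (NeZero.ne N)
  by_cases hx : x = 0
  · subst hx
    rw [if_pos rfl, zero_sub]
    have h1 : ((-1 : ZMod N)).val = N - 1 := by
      obtain ⟨k, rfl⟩ := Nat.exists_eq_succ_of_ne_zero (NeZero.ne N)
      simp [ZMod.val_neg_one k]
    rw [ZMod.val_zero, h1, pow_zero, ← pow_succ', Nat.sub_add_cancel hN]
  · rw [if_neg hx]
    have hv : 1 ≤ x.val := Nat.one_le_iff_ne_zero.mpr ((ZMod.val_eq_zero x).not.mpr hx)
    have h2 : ((x - 1 : ZMod N)).val = x.val - 1 := by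
      have h3 : (x - 1 : ZMod N) = ((x.val - 1 : ℕ) : ZMod N) := by
        push_cast [Nat.cast_sub hv]
        rw [ZMod.natCast_val, ZMod.cast_id]
      rw [h3, ZMod.val_cast_of_lt]
      exact lt_of_le_of_lt (Nat.sub_le _ _) (ZMod.val_lt x)
    rw [h2, ← pow_succ', Nat.sub_add_cancel hv, sub_self]

theorem stmt_18 (N : ℕ) [NeZero N] (hN : 0 < N) (m : ZMod N)
    (μ : ℂ) (hμ0 : μ ≠ 0) (hμ1 : ‖μ‖ ≠ 1)
    (a : ℝ) (ha : a = -(‖μ‖) ^ 2)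
    (σ : ZMod N → ℝ) (γ β : ZMod N → ℝ)
    (hγ : ∀ j, γ j = ∑ c : ZMod N, a ^ ((j + c - 2 : ZMod N)).val * σ c / (1 - a ^ N))
    (hβ : ∀ j, β j = -a * ∑ c : ZMod N, a ^ ((c - j - 1 : ZMod N)).val * σ c / (1 - a ^ N)) :
    (∀ j, γ (2 - j) + (‖μ‖) ^ 2 * γ (1 - j) = σ j) ∧
    (∀ j, β (m - j - 1) + (‖μ‖) ^ 2 * β (m - j)
        = (‖μ‖) ^ 2 * σ (m - j)) := by
  have hμ2 : (‖μ‖) ^ 2 = -a := by rw [ha]; ring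
  have h0 : 0 < ‖μ‖ := norm_pos_iff.mpr hμ0
  have hane : (1 : ℝ) - a ^ N ≠ 0 := by
    intro h
    have h1 : ((‖μ‖) ^ 2) ^ N = 1 := by
      have ha1 : a ^ N = 1 := by linarith
      have habs : |a ^ N| = 1 := by rw [ha1]; norm_num
      rwa [abs_pow, ha, abs_neg, abs_pow, abs_of_pos h0] at habs
    have h2 : (‖μ‖) ^ 2 = 1 := by
      set x := (‖μ‖) ^ 2 with hx
      have hx0 : 0 ≤ x := sq_nonneg _
      rcases lt_trichotomy x 1 with hlt | heq | hgt
      · have := pow_lt_one₀ hx0 hlt (NeZero.ne N); linarith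
      · exact heq
      · have := one_lt_pow₀ hgt (NeZero.ne N); linarith
    apply hμ1
    nlinarith [sq_nonneg (‖μ‖ - 1)]
  have main : ∀ j : ZMod N,
      (∑ c : ZMod N, a ^ ((c - j : ZMod N)).val * σ c / (1 - a ^ N))
        - a * ∑ c : ZMod N, a ^ ((c - j - 1 : ZMod N)).val * σ c / (1 - a ^ N) = σ j := by
    intro j
    rw [Finset.mul_sum, ← Finset.sum_sub_distrib]
    have hterm : ∀ c : ZMod N,
        a ^ ((c - j : ZMod N)).val * σ c / (1 - a ^ N)
          - a * (a ^ ((c - j - 1 : ZMod N)).val * σ c / (1 - a ^ N))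
        = if c = j then σ c else 0 := by
      intro c
      have hk := key_18 N a (c - j)
      simp only [sub_eq_zero] at hk
      have heq : a ^ ((c - j : ZMod N)).val * σ c / (1 - a ^ N)
          - a * (a ^ ((c - j - 1 : ZMod N)).val * σ c / (1 - a ^ N))
          = (a ^ ((c - j : ZMod N)).val - a * a ^ ((c - j - 1 : ZMod N)).val) * σ c
              / (1 - a ^ N) := by ring
      rw [heq, hk]
      split_ifs with h
      · rw [mul_comm, mul_div_assoc, div_self hane, mul_one]
      · simp
    simp only [hterm]
    rw [Finset.sum_ite_eq' Finset.univ j σ]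
    simp
  constructor
  · intro j
    simp only [hγ, hμ2,
      show ∀ c : ZMod N, ((2 - j) + c - 2 : ZMod N) = c - j from fun c => by ring,
      show ∀ c : ZMod N, ((1 - j) + c - 2 : ZMod N) = c - j - 1 from fun c => by ring]
    linear_combination main j
  · intro j
    simp only [hβ, hμ2,
      show ∀ c : ZMod N, (c - (m - j - 1) - 1 : ZMod N) = c - (m - j) from fun c => by ring]
    linear_combination (-a) * main (m - j)
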